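/- Let 1/2 < H < 1, ε ∈ (0, 1/2), and X : [0,T] → ℝ with finite sup norm ‖X‖_{∞,T} and (H−ε)-Hölder seminorm ‖X‖_{H−ε,T}. Define B(t) = t^{1/2−H} ∫₀ᵗ (X(t) − X(t−s)) s^{−1/2−H} ds + ∫₀ᵗ X(t−s)(t^{1/2−H} − (t−s)^{1/2−H}) s^{−1/2−H} ds. Then |B(t)| ≤ C(‖X‖_{H−ε,T} t^{1−H−ε} + ‖X‖_{∞,T} t^{1−2H}) for a constant C depending only on H and ε. -/

import Mathlib

open Set intervalIntegral MeasureTheory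

lemma aux_mvt12 {p a b : ℝ} (hp : p < 0) (ha : 0 < a) (hab : a ≤ b) :
    a ^ p - b ^ p ≤ (-p) * a ^ (p - 1) * (b - a) := by
  rcases eq_or_lt_of_le hab with rfl | hab
  · simp
  obtain ⟨c, hc, hc'⟩ := exists_hasDerivAt_eq_slope (fun x : ℝ => x ^ p)
    (fun x : ℝ => p * x ^ (p - 1)) hab
    (continuousOn_id.rpow_const (fun x hx => Or.inl (ha.trans_le hx.1).ne'))
    (fun x hx => Real.hasDerivAt_rpow_const (Or.inl (ha.trans hx.1).ne'))
  have h1 : c ^ (p - 1) ≤ a ^ (p - 1) :=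
    Real.rpow_le_rpow_of_nonpos ha hc.1.le (by linarith)
  have hba : 0 < b - a := by linarith
  have h2 : (b ^ p - a ^ p) = p * c ^ (p - 1) * (b - a) := by
    field_simp at hc'; linarith [hc']
  nlinarith [h2, mul_le_mul_of_nonneg_right h1 hba.le]

set_option maxHeartbeats 1000000 in
/-- Bound on the singular term `B(t)`: there is a constant `C` depending only on `H` and `ε`
such that for any `T`, any `X` with sup bound `Ninf` and `(H−ε)`-Hölder bound `Nhol` on `[0,T]`,
`|B(t)| ≤ C (Nhol t^{1−H−ε} + Ninf t^{1−2H})` for all `t ∈ (0,T]`, where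
`B(t) = t^{1/2−H} ∫₀ᵗ (X(t)−X(t−s)) s^{−1/2−H} ds
      + ∫₀ᵗ X(t−s)(t^{1/2−H}−(t−s)^{1/2−H}) s^{−1/2−H} ds`. -/
theorem stmt12 (H ε : ℝ) (hH : 1 / 2 < H) (hH1 : H < 1) (hε : 0 < ε) (hε2 : ε < 1 / 2) :
    ∃ C : ℝ, 0 < C ∧
      ∀ (T : ℝ) (_ : 0 < T) (X : ℝ → ℝ) (Ninf Nhol : ℝ),
        (∀ t ∈ Set.Icc (0:ℝ) T, |X t| ≤ Ninf) →
        (∀ s t : ℝ, 0 ≤ s → s ≤ t → t ≤ T → |X t - X s| ≤ Nhol * (t - s) ^ (H - ε)) →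
        ∀ t ∈ Set.Ioc (0:ℝ) T,
          |t ^ (1 / 2 - H) * (∫ s in (0:ℝ)..t, (X t - X (t - s)) * s ^ (-(1 / 2) - H)) +
              ∫ s in (0:ℝ)..t,
                X (t - s) * (t ^ (1 / 2 - H) - (t - s) ^ (1 / 2 - H)) * s ^ (-(1 / 2) - H)| ≤
            C * (Nhol * t ^ (1 - H - ε) + Ninf * t ^ (1 - 2 * H)) := by
  have h32 : (0:ℝ) < 3 / 2 - H := by linarith
  have h2pow : (0:ℝ) < (2:ℝ) ^ (2 * H - 1) := Real.rpow_pos_of_pos (by norm_num) _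
  set K1 : ℝ := 1 / (1 / 2 - ε) with hK1
  set K2 : ℝ := ((H - 1 / 2) / (3 / 2 - H) + 1 / (3 / 2 - H)) * (2:ℝ) ^ (2 * H - 1) with hK2
  have hK1pos : 0 < K1 := div_pos one_pos (by linarith)
  have hK2pos : 0 < K2 :=
    mul_pos (add_pos (div_pos (by linarith) h32) (div_pos one_pos h32)) h2pow
  refine ⟨K1 + K2, by linarith, ?_⟩
  intro T hT X Ninf Nhol hinf hhol t ht
  obtain ⟨ht0, htT⟩ := ht
  have hNinf : 0 ≤ Ninf := (abs_nonneg _).trans (hinf 0 ⟨le_rfl, hT.le⟩)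
  have hNhol : 0 ≤ Nhol := by
    have h := (abs_nonneg _).trans (hhol 0 T le_rfl hT.le le_rfl)
    have hTp : (0:ℝ) < (T - 0) ^ (H - ε) := Real.rpow_pos_of_pos (by linarith) _
    nlinarith
  have ht2 : (0:ℝ) < t / 2 := by linarith
  have ht2t : t / 2 < t := by linarith
  -- ########## Piece A ##########
  have hq1 : (-1:ℝ) < -(1 / 2) - ε := by linarith
  have hintg1 : IntervalIntegrable (fun s : ℝ => Nhol * s ^ (-(1 / 2) - ε)) volume 0 t :=
    (intervalIntegral.intervalIntegrable_rpow' hq1).const_mul Nhol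
  have hA : |∫ s in (0:ℝ)..t, (X t - X (t - s)) * s ^ (-(1 / 2) - H)| ≤
      |∫ s in (0:ℝ)..t, Nhol * s ^ (-(1 / 2) - ε)| := by
    apply intervalIntegral.norm_integral_le_abs_of_norm_le
      (f := fun s => (X t - X (t - s)) * s ^ (-(1 / 2) - H)) _ hintg1
    filter_upwards [MeasureTheory.ae_restrict_mem measurableSet_uIoc] with s hs
    rw [Set.uIoc_of_le ht0.le] at hs
    obtain ⟨hs0, hst⟩ := hs
    have hXb : |X t - X (t - s)| ≤ Nhol * s ^ (H - ε) := by
      have h := hhol (t - s) t (by linarith) (by linarith) htT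
      rw [show t - (t - s) = s by ring] at h
      exact h
    have hsq : (0:ℝ) < s ^ (-(1 / 2) - H) := Real.rpow_pos_of_pos hs0 _
    calc ‖(X t - X (t - s)) * s ^ (-(1 / 2) - H)‖
        = |X t - X (t - s)| * s ^ (-(1 / 2) - H) := by
          rw [norm_mul, Real.norm_eq_abs, Real.norm_eq_abs, abs_of_pos hsq]
      _ ≤ (Nhol * s ^ (H - ε)) * s ^ (-(1 / 2) - H) :=
          mul_le_mul_of_nonneg_right hXb hsq.le
      _ = Nhol * s ^ (-(1 / 2) - ε) := by
          rw [mul_assoc, ← Real.rpow_add hs0]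
          congr 2
          ring
  have hintA : (∫ s in (0:ℝ)..t, Nhol * s ^ (-(1 / 2) - ε)) =
      Nhol * (t ^ (1 / 2 - ε) / (1 / 2 - ε)) := by
    rw [intervalIntegral.integral_const_mul, integral_rpow (Or.inl hq1),
      show -(1 / 2) - ε + 1 = 1 / 2 - ε by ring,
      Real.zero_rpow (ne_of_gt (by linarith)), sub_zero]
  have habsA : |t ^ (1 / 2 - H) *
      ∫ s in (0:ℝ)..t, (X t - X (t - s)) * s ^ (-(1 / 2) - H)| ≤
      K1 * (Nhol * t ^ (1 - H - ε)) := by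
    have htp : (0:ℝ) < t ^ (1 / 2 - H) := Real.rpow_pos_of_pos ht0 _
    rw [abs_mul, abs_of_pos htp]
    have h1 : t ^ (1 / 2 - H) * |∫ s in (0:ℝ)..t, (X t - X (t - s)) * s ^ (-(1 / 2) - H)| ≤
        t ^ (1 / 2 - H) * (Nhol * (t ^ (1 / 2 - ε) / (1 / 2 - ε))) := by
      refine mul_le_mul_of_nonneg_left ?_ htp.le
      refine hA.trans ?_
      rw [hintA, abs_of_nonneg (mul_nonneg hNhol
        (div_nonneg (Real.rpow_pos_of_pos ht0 _).le (by linarith)))]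
    refine h1.trans_eq ?_
    have hts : t ^ (1 - H - ε) = t ^ (1 / 2 - H) * t ^ (1 / 2 - ε) := by
      rw [← Real.rpow_add ht0]; congr 1; ring
    rw [hK1, hts]; field_simp
  -- ########## Piece B ##########
  set G : ℝ → ℝ := fun s =>
    Ninf * (((t - s) ^ (1 / 2 - H) - t ^ (1 / 2 - H)) * s ^ (-(1 / 2) - H)) with hG
  set m1 : ℝ → ℝ := fun s =>
    (Ninf * ((H - 1 / 2) * (t / 2) ^ (1 / 2 - H - 1))) * s ^ (1 / 2 - H) with hm1
  set m2 : ℝ → ℝ := fun s =>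
    (Ninf * (t / 2) ^ (-(1 / 2) - H)) * (t - s) ^ (1 / 2 - H) with hm2
  have hGmeas : Measurable G := by
    rw [hG]; fun_prop
  -- pointwise bounds
  have hGnonneg : ∀ s ∈ Set.Ioo (0:ℝ) t, 0 ≤ G s ∧
      |G s| = G s := by
    intro s hs
    have hts0 : 0 < t - s := by linarith [hs.2]
    have hmono : t ^ (1 / 2 - H) ≤ (t - s) ^ (1 / 2 - H) :=
      Real.rpow_le_rpow_of_nonpos hts0 (by linarith [hs.1]) (by linarith)
    have hsq : (0:ℝ) ≤ s ^ (-(1 / 2) - H) := (Real.rpow_pos_of_pos hs.1 _).le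
    have : 0 ≤ G s := by
      rw [hG]
      exact mul_nonneg hNinf (mul_nonneg (by linarith) hsq)
    exact ⟨this, abs_of_nonneg this⟩
  have hbnd1 : ∀ s ∈ Set.Ioc (0:ℝ) (t / 2), ‖G s‖ ≤ m1 s := by
    intro s hs
    obtain ⟨hs0, hst2⟩ := hs
    have hst : s < t := lt_of_le_of_lt hst2 ht2t
    have hts0 : 0 < t - s := by linarith
    have hmvt := aux_mvt12 (show (1 / 2 - H) < 0 by linarith) hts0 (by linarith : t - s ≤ t)
    rw [show t - (t - s) = s by ring, show -(1 / 2 - H) = H - 1 / 2 by ring] at hmvt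
    have hstep2 : (t - s) ^ (1 / 2 - H - 1) ≤ (t / 2) ^ (1 / 2 - H - 1) :=
      Real.rpow_le_rpow_of_nonpos ht2 (by linarith) (by linarith)
    have hdb : (t - s) ^ (1 / 2 - H) - t ^ (1 / 2 - H) ≤
        (H - 1 / 2) * (t / 2) ^ (1 / 2 - H - 1) * s := by
      refine hmvt.trans ?_
      have : (H - 1 / 2) * (t - s) ^ (1 / 2 - H - 1) ≤
          (H - 1 / 2) * (t / 2) ^ (1 / 2 - H - 1) :=
        mul_le_mul_of_nonneg_left hstep2 (by linarith)
      exact mul_le_mul_of_nonneg_right this hs0.le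
    have hsq : (0:ℝ) ≤ s ^ (-(1 / 2) - H) := (Real.rpow_pos_of_pos hs0 _).le
    have hss : s * s ^ (-(1 / 2) - H) = s ^ (1 / 2 - H) := by
      rw [show (1 / 2 - H : ℝ) = 1 + (-(1 / 2) - H) by ring,
        Real.rpow_one_add' hs0.le (by intro h; rw [show 1 + (-(1/2) - H) = 1/2 - H by ring] at h; linarith [h])]
    rw [Real.norm_eq_abs, (hGnonneg s ⟨hs0, hst⟩).2]
    simp only [hG, hm1]
    have hstep3 : ((t - s) ^ (1 / 2 - H) - t ^ (1 / 2 - H)) * s ^ (-(1 / 2) - H) ≤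
        ((H - 1 / 2) * (t / 2) ^ (1 / 2 - H - 1) * s) * s ^ (-(1 / 2) - H) :=
      mul_le_mul_of_nonneg_right hdb hsq
    refine (mul_le_mul_of_nonneg_left hstep3 hNinf).trans_eq ?_
    rw [mul_assoc ((H - 1 / 2) * (t / 2) ^ (1 / 2 - H - 1)) s _, hss]
    ring
  have hbnd2 : ∀ s ∈ Set.Ioo (t / 2) t, ‖G s‖ ≤ m2 s := by
    intro s hs
    obtain ⟨hs2, hst⟩ := hs
    have hs0 : 0 < s := lt_trans ht2 hs2
    have hts0 : 0 < t - s := by linarith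
    have htp : (0:ℝ) ≤ t ^ (1 / 2 - H) := (Real.rpow_pos_of_pos ht0 _).le
    have hsq : s ^ (-(1 / 2) - H) ≤ (t / 2) ^ (-(1 / 2) - H) :=
      Real.rpow_le_rpow_of_nonpos ht2 hs2.le (by linarith)
    have htsp : (0:ℝ) ≤ (t - s) ^ (1 / 2 - H) := (Real.rpow_pos_of_pos hts0 _).le
    rw [Real.norm_eq_abs, (hGnonneg s ⟨hs0, hst⟩).2]
    simp only [hG, hm2]
    have h1 : ((t - s) ^ (1 / 2 - H) - t ^ (1 / 2 - H)) * s ^ (-(1 / 2) - H) ≤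
        (t - s) ^ (1 / 2 - H) * s ^ (-(1 / 2) - H) := by
      refine mul_le_mul_of_nonneg_right (by linarith) (Real.rpow_pos_of_pos hs0 _).le
    have h2 : (t - s) ^ (1 / 2 - H) * s ^ (-(1 / 2) - H) ≤
        (t - s) ^ (1 / 2 - H) * (t / 2) ^ (-(1 / 2) - H) :=
      mul_le_mul_of_nonneg_left hsq htsp
    have := mul_le_mul_of_nonneg_left (h1.trans h2) hNinf
    refine this.trans_eq (by ring)
  -- ae form of nonvanishing at t
  have hnet : ∀ᵐ s ∂(volume : Measure ℝ), s ≠ t := by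
    rw [MeasureTheory.ae_iff]
    simpa using measure_singleton (α := ℝ) t
  -- integrability of majorants
  have hm1int : IntervalIntegrable m1 volume 0 (t / 2) :=
    (intervalIntegral.intervalIntegrable_rpow' (by linarith : (-1:ℝ) < 1 / 2 - H)).const_mul _
  have hsubint : IntervalIntegrable (fun s : ℝ => (t - s) ^ (1 / 2 - H)) volume (t / 2) t := by
    have h := (intervalIntegral.intervalIntegrable_rpow'
      (show (-1:ℝ) < 1 / 2 - H by linarith) (a := 0) (b := t / 2)).comp_sub_left t
    rw [show t - t / 2 = t / 2 by ring, sub_zero] at h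
    exact h.symm
  have hm2int : IntervalIntegrable m2 volume (t / 2) t := hsubint.const_mul _
  -- integrability of G
  have hGint1 : IntervalIntegrable G volume 0 (t / 2) := by
    refine hm1int.mono_fun hGmeas.aestronglyMeasurable ?_
    filter_upwards [MeasureTheory.ae_restrict_mem measurableSet_uIoc] with s hs
    rw [Set.uIoc_of_le ht2.le] at hs
    refine (hbnd1 s hs).trans (le_abs_self _)
  have hGint2 : IntervalIntegrable G volume (t / 2) t := by
    refine hm2int.mono_fun hGmeas.aestronglyMeasurable ?_
    filter_upwards [MeasureTheory.ae_restrict_mem measurableSet_uIoc,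
      MeasureTheory.ae_restrict_of_ae hnet] with s hs hsne
    rw [Set.uIoc_of_le ht2t.le] at hs
    refine (hbnd2 s ⟨hs.1, lt_of_le_of_ne hs.2 hsne⟩).trans (le_abs_self _)
  have hGint : IntervalIntegrable G volume 0 t := hGint1.trans hGint2
  -- main bound for piece B
  have hB1 : |∫ s in (0:ℝ)..t,
      X (t - s) * (t ^ (1 / 2 - H) - (t - s) ^ (1 / 2 - H)) * s ^ (-(1 / 2) - H)| ≤
      |∫ s in (0:ℝ)..t, G s| := by
    apply intervalIntegral.norm_integral_le_abs_of_norm_le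
      (f := fun s => X (t - s) * (t ^ (1 / 2 - H) - (t - s) ^ (1 / 2 - H)) * s ^ (-(1 / 2) - H))
      _ hGint
    filter_upwards [MeasureTheory.ae_restrict_mem measurableSet_uIoc,
      MeasureTheory.ae_restrict_of_ae hnet] with s hs hsne
    rw [Set.uIoc_of_le ht0.le] at hs
    obtain ⟨hs0, hst'⟩ := hs
    have hst : s < t := lt_of_le_of_ne hst' hsne
    have hts0 : 0 < t - s := by linarith
    have hXb : |X (t - s)| ≤ Ninf := hinf (t - s) ⟨by linarith, by linarith⟩
    have hmono : t ^ (1 / 2 - H) ≤ (t - s) ^ (1 / 2 - H) :=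
      Real.rpow_le_rpow_of_nonpos hts0 (by linarith) (by linarith)
    have hsq : (0:ℝ) < s ^ (-(1 / 2) - H) := Real.rpow_pos_of_pos hs0 _
    have habs2 : |t ^ (1 / 2 - H) - (t - s) ^ (1 / 2 - H)| =
        (t - s) ^ (1 / 2 - H) - t ^ (1 / 2 - H) := by
      rw [abs_of_nonpos (by linarith)]; ring
    rw [Real.norm_eq_abs, abs_mul, abs_mul, habs2, abs_of_pos hsq]
    simp only [hG]
    have h1 : |X (t - s)| * ((t - s) ^ (1 / 2 - H) - t ^ (1 / 2 - H)) ≤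
        Ninf * ((t - s) ^ (1 / 2 - H) - t ^ (1 / 2 - H)) :=
      mul_le_mul_of_nonneg_right hXb (by linarith)
    calc |X (t - s)| * ((t - s) ^ (1 / 2 - H) - t ^ (1 / 2 - H)) * s ^ (-(1 / 2) - H)
        ≤ Ninf * ((t - s) ^ (1 / 2 - H) - t ^ (1 / 2 - H)) * s ^ (-(1 / 2) - H) :=
          mul_le_mul_of_nonneg_right h1 hsq.le
      _ = Ninf * (((t - s) ^ (1 / 2 - H) - t ^ (1 / 2 - H)) * s ^ (-(1 / 2) - H)) := by ring
  -- computing the majorant integrals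
  have hIm1 : (∫ s in (0:ℝ)..(t / 2), m1 s) =
      Ninf * ((H - 1 / 2) / (3 / 2 - H)) * (t / 2) ^ (1 - 2 * H) := by
    simp only [hm1]
    rw [intervalIntegral.integral_const_mul,
      integral_rpow (Or.inl (by linarith : (-1:ℝ) < 1 / 2 - H)),
      Real.zero_rpow (ne_of_gt (by linarith)), sub_zero]
    have hc : (t / 2) ^ (1 / 2 - H - 1) * (t / 2) ^ (1 / 2 - H + 1) = (t / 2) ^ (1 - 2 * H) := by
      rw [← Real.rpow_add ht2]; congr 1; ring
    linear_combination Ninf * (H - 1 / 2) * (3 / 2 - H)⁻¹ * hc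
  have hIm2 : (∫ s in (t / 2)..t, m2 s) =
      Ninf * (1 / (3 / 2 - H)) * (t / 2) ^ (1 - 2 * H) := by
    simp only [hm2]
    rw [intervalIntegral.integral_const_mul]
    have hcomp : (∫ s in (t / 2)..t, (t - s) ^ (1 / 2 - H)) =
        ∫ x in (0:ℝ)..(t / 2), x ^ (1 / 2 - H) := by
      rw [intervalIntegral.integral_comp_sub_left (fun x : ℝ => x ^ (1 / 2 - H)) t,
        show t - t / 2 = t / 2 by ring, sub_self]
    rw [hcomp, integral_rpow (Or.inl (by linarith : (-1:ℝ) < 1 / 2 - H)),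
      Real.zero_rpow (ne_of_gt (by linarith)), sub_zero]
    have hc : (t / 2) ^ (-(1 / 2) - H) * (t / 2) ^ (1 / 2 - H + 1) = (t / 2) ^ (1 - 2 * H) := by
      rw [← Real.rpow_add ht2]; congr 1; ring
    linear_combination Ninf * (3 / 2 - H)⁻¹ * hc
  have hIm1nn : 0 ≤ Ninf * ((H - 1 / 2) / (3 / 2 - H)) * (t / 2) ^ (1 - 2 * H) :=
    mul_nonneg (mul_nonneg hNinf (div_nonneg (by linarith) h32.le))
      (Real.rpow_pos_of_pos ht2 _).le
  have hIm2nn : 0 ≤ Ninf * (1 / (3 / 2 - H)) * (t / 2) ^ (1 - 2 * H) :=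
    mul_nonneg (mul_nonneg hNinf (div_nonneg one_pos.le h32.le))
      (Real.rpow_pos_of_pos ht2 _).le
  -- bound |∫ G| over the two halves
  have hG1 : |∫ s in (0:ℝ)..(t / 2), G s| ≤
      Ninf * ((H - 1 / 2) / (3 / 2 - H)) * (t / 2) ^ (1 - 2 * H) := by
    have h := intervalIntegral.norm_integral_le_abs_of_norm_le (f := G) (g := m1)
      (μ := volume) (a := 0) (b := t / 2) ?_ hm1int
    · rw [hIm1, abs_of_nonneg hIm1nn] at h
      exact h
    · filter_upwards [MeasureTheory.ae_restrict_mem measurableSet_uIoc] with s hs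
      rw [Set.uIoc_of_le ht2.le] at hs
      exact hbnd1 s hs
  have hG2 : |∫ s in (t / 2)..t, G s| ≤
      Ninf * (1 / (3 / 2 - H)) * (t / 2) ^ (1 - 2 * H) := by
    have h := intervalIntegral.norm_integral_le_abs_of_norm_le (f := G) (g := m2)
      (μ := volume) (a := t / 2) (b := t) ?_ hm2int
    · rw [hIm2, abs_of_nonneg hIm2nn] at h
      exact h
    · filter_upwards [MeasureTheory.ae_restrict_mem measurableSet_uIoc,
        MeasureTheory.ae_restrict_of_ae hnet] with s hs hsne
      rw [Set.uIoc_of_le ht2t.le] at hs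
      exact hbnd2 s ⟨hs.1, lt_of_le_of_ne hs.2 hsne⟩
  have hsplit : (∫ s in (0:ℝ)..t, G s) =
      (∫ s in (0:ℝ)..(t / 2), G s) + ∫ s in (t / 2)..t, G s :=
    (intervalIntegral.integral_add_adjacent_intervals hGint1 hGint2).symm
  have hc2t : (t / 2) ^ (1 - 2 * H) = t ^ (1 - 2 * H) * (2:ℝ) ^ (2 * H - 1) := by
    rw [Real.div_rpow ht0.le (by norm_num : (0:ℝ) ≤ 2), div_eq_mul_inv,
      ← Real.rpow_neg (by norm_num : (0:ℝ) ≤ 2)]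
    congr 1; ring
  have habsB : |∫ s in (0:ℝ)..t,
      X (t - s) * (t ^ (1 / 2 - H) - (t - s) ^ (1 / 2 - H)) * s ^ (-(1 / 2) - H)| ≤
      K2 * (Ninf * t ^ (1 - 2 * H)) := by
    refine hB1.trans ?_
    rw [hsplit]
    refine (abs_add_le _ _).trans ?_
    refine (add_le_add hG1 hG2).trans_eq ?_
    rw [hc2t, hK2]; ring
  -- ########## combine ##########
  have htpow1 : (0:ℝ) ≤ Nhol * t ^ (1 - H - ε) :=
    mul_nonneg hNhol (Real.rpow_pos_of_pos ht0 _).le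
  have htpow2 : (0:ℝ) ≤ Ninf * t ^ (1 - 2 * H) :=
    mul_nonneg hNinf (Real.rpow_pos_of_pos ht0 _).le
  calc |t ^ (1 / 2 - H) * (∫ s in (0:ℝ)..t, (X t - X (t - s)) * s ^ (-(1 / 2) - H)) +
        ∫ s in (0:ℝ)..t,
          X (t - s) * (t ^ (1 / 2 - H) - (t - s) ^ (1 / 2 - H)) * s ^ (-(1 / 2) - H)|
      ≤ |t ^ (1 / 2 - H) * (∫ s in (0:ℝ)..t, (X t - X (t - s)) * s ^ (-(1 / 2) - H))| +
        |∫ s in (0:ℝ)..t,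
          X (t - s) * (t ^ (1 / 2 - H) - (t - s) ^ (1 / 2 - H)) * s ^ (-(1 / 2) - H)| :=
        abs_add_le _ _
    _ ≤ K1 * (Nhol * t ^ (1 - H - ε)) + K2 * (Ninf * t ^ (1 - 2 * H)) := add_le_add habsA habsB
    _ ≤ (K1 + K2) * (Nhol * t ^ (1 - H - ε) + Ninf * t ^ (1 - 2 * H)) := by nlinarith
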